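/- For every integer l ≥ 1, the sum over all l' with 0 ≤ l' ≤ l and all non-decreasing surjective maps ψ : {1,…,l} → {1,…,l'} of (−1)^{l−l'} · ∏_{i=1}^{l'} 1/|ψ^{−1}(i)|! equals 1/l!. -/

import Mathlib

open scoped Classical

/-! Auxiliary definitions -/

noncomputable def MS (l m : ℕ) : Finset (Fin l → Fin m) :=
  (Finset.univ : Finset (Fin l → Fin m)).filter
    (fun ψ => Monotone ψ ∧ Function.Surjective ψ)

noncomputable def W {l m : ℕ} (ψ : Fin l → Fin m) : ℚ :=
  ∏ i : Fin m, (1 : ℚ) /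
    (Nat.factorial ((Finset.univ : Finset (Fin l)).filter (fun j => ψ j = i)).card)

noncomputable def Sm (l m : ℕ) : ℚ := ∑ ψ ∈ MS l m, W ψ

noncomputable def aOf {l m : ℕ} (ψ : Fin l → Fin (m + 1)) : ℕ :=
  l - ((Finset.univ : Finset (Fin l)).filter (fun y => ψ y = Fin.last m)).card

/-- For a monotone surjection onto `Fin (m+1)`, the fiber of the top element is the
final segment starting at `aOf ψ`. -/
lemma fiber_top_iff {l m : ℕ} {ψ : Fin l → Fin (m + 1)} (hm : Monotone ψ)
    (hs : Function.Surjective ψ) (x : Fin l) :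
    ψ x = Fin.last m ↔ aOf ψ ≤ (x : ℕ) := by
  classical
  set F := (Finset.univ : Finset (Fin l)).filter (fun y => ψ y = Fin.last m) with hF
  obtain ⟨x₀, hx₀⟩ := hs (Fin.last m)
  have hne : F.Nonempty := ⟨x₀, by simp [hF, hx₀]⟩
  set a := F.min' hne with ha
  have haF : a ∈ F := F.min'_mem hne
  have haL : ψ a = Fin.last m := by
    simpa [hF] using haF
  have hFeq : F = Finset.Ici a := by
    ext y
    simp only [hF, Finset.mem_filter, Finset.mem_univ, true_and, Finset.mem_Ici]
    constructor
    · intro hy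
      exact F.min'_le y (by simp [hF, hy])
    · intro hy
      refine le_antisymm (Fin.le_last _) ?_
      calc Fin.last m = ψ a := haL.symm
        _ ≤ ψ y := hm hy
  have hcard : F.card = l - (a : ℕ) := by rw [hFeq, Fin.card_Ici]
  have haOf : aOf ψ = (a : ℕ) := by
    rw [aOf, ← hF, hcard, Nat.sub_sub_self (le_of_lt a.2)]
  rw [haOf]
  constructor
  · intro hx
    exact F.min'_le x (by simp [hF, hx])
  · intro hx
    refine le_antisymm (Fin.le_last _) ?_
    calc Fin.last m = ψ a := haL.symm
      _ ≤ ψ x := hm hx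

lemma aOf_lt {l m : ℕ} {ψ : Fin l → Fin (m + 1)} (hl : 1 ≤ l)
    (hs : Function.Surjective ψ) : aOf ψ < l := by
  obtain ⟨x₀, hx₀⟩ := hs (Fin.last m)
  have hpos : 0 < ((Finset.univ : Finset (Fin l)).filter
      (fun y => ψ y = Fin.last m)).card :=
    Finset.card_pos.mpr ⟨x₀, by simp [hx₀]⟩
  exact Nat.sub_lt hl hpos

lemma card_fiber_top {l m : ℕ} (ψ : Fin l → Fin (m + 1)) :
    ((Finset.univ : Finset (Fin l)).filter (fun y => ψ y = Fin.last m)).card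
      = l - aOf ψ := by
  have h : ((Finset.univ : Finset (Fin l)).filter (fun y => ψ y = Fin.last m)).card ≤ l := by
    simpa using Finset.card_filter_le (Finset.univ : Finset (Fin l))
      (fun y => ψ y = Fin.last m)
  rw [aOf, Nat.sub_sub_self h]

/-- Restriction of a monotone surjection to the complement of the top fiber. -/
noncomputable def down {l m : ℕ} (ψ : Fin l → Fin (m + 1)) (hm : Monotone ψ)
    (hs : Function.Surjective ψ) : Fin (aOf ψ) → Fin m :=
  fun x => ⟨(ψ (Fin.castLE (Nat.sub_le _ _) x)).val, by
    have hne : ψ (Fin.castLE (Nat.sub_le _ _) x) ≠ Fin.last m := by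
      rw [Ne, fiber_top_iff hm hs]
      simp only [Fin.coe_castLE, Nat.not_le]
      exact x.2
    have h1 : (ψ (Fin.castLE (Nat.sub_le _ _) x)).val < m + 1 :=
      (ψ (Fin.castLE (Nat.sub_le _ _) x)).2
    have h2 : (ψ (Fin.castLE (Nat.sub_le _ _) x)).val ≠ m := by
      intro h
      exact hne (Fin.ext (by simpa using h))
    omega⟩

/-- Extension of a map by a new top block starting at position `a`. -/
def up {l m : ℕ} (a : ℕ) (ψ' : Fin a → Fin m) : Fin l → Fin (m + 1) :=
  fun x => if h : (x : ℕ) < a then (ψ' ⟨x, h⟩).castSucc else Fin.last m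

lemma down_mem {l m : ℕ} {ψ : Fin l → Fin (m + 1)} (hm : Monotone ψ)
    (hs : Function.Surjective ψ) :
    Monotone (down ψ hm hs) ∧ Function.Surjective (down ψ hm hs) := by
  constructor
  · intro x y hxy
    show (ψ (Fin.castLE (Nat.sub_le _ _) x)).val ≤ (ψ (Fin.castLE (Nat.sub_le _ _) y)).val
    exact hm hxy
  · intro c
    obtain ⟨y, hy⟩ := hs c.castSucc
    have hylt : (y : ℕ) < aOf ψ := by
      by_contra h
      have h2 := (fiber_top_iff hm hs y).mpr (Nat.le_of_not_lt h)
      rw [hy] at h2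
      have h3 : (c : ℕ) = m := by simpa [Fin.ext_iff] using h2
      have := c.2
      omega
    refine ⟨⟨(y : ℕ), hylt⟩, Fin.ext ?_⟩
    show (ψ (Fin.castLE (Nat.sub_le _ _) (⟨(y : ℕ), hylt⟩ : Fin (aOf ψ)))).val = (c : ℕ)
    exact congrArg Fin.val hy

lemma up_mem {l m a : ℕ} (ha : a < l) {ψ' : Fin a → Fin m} (hm : Monotone ψ')
    (hs : Function.Surjective ψ') :
    Monotone (up (l := l) a ψ') ∧ Function.Surjective (up (l := l) a ψ') := by
  constructor
  · intro x y hxy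
    by_cases hx : (x : ℕ) < a
    · by_cases hy : (y : ℕ) < a
      · simp only [up, dif_pos hx, dif_pos hy]
        have h1 : ψ' ⟨x, hx⟩ ≤ ψ' ⟨y, hy⟩ := hm hxy
        exact Fin.castSucc_le_castSucc_iff.mpr h1
      · simp only [up, dif_pos hx, dif_neg hy]
        exact Fin.le_last _
    · have hy : ¬ (y : ℕ) < a := by
        have h1 : (x : ℕ) ≤ y := hxy
        omega
      simp only [up, dif_neg hx, dif_neg hy]
      exact le_refl _
  · intro c
    rcases Fin.eq_castSucc_or_eq_last c with ⟨c', rfl⟩ | rfl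
    · obtain ⟨x, hx⟩ := hs c'
      refine ⟨Fin.castLE (le_of_lt ha) x, ?_⟩
      have hxa : ((Fin.castLE (le_of_lt ha) x : Fin l) : ℕ) < a := x.2
      show (if h : ((Fin.castLE (le_of_lt ha) x : Fin l) : ℕ) < a
        then (ψ' ⟨((Fin.castLE (le_of_lt ha) x : Fin l) : ℕ), h⟩).castSucc
        else Fin.last m) = c'.castSucc
      rw [dif_pos hxa]
      exact congrArg Fin.castSucc hx
    · refine ⟨⟨l - 1, by omega⟩, ?_⟩
      have h1 : ¬ (l - 1 < a) := by omega
      show (if h : ((⟨l - 1, by omega⟩ : Fin l) : ℕ) < a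
        then (ψ' ⟨((⟨l - 1, by omega⟩ : Fin l) : ℕ), h⟩).castSucc
        else Fin.last m) = Fin.last m
      rw [dif_neg h1]

lemma aOf_up {l m a : ℕ} (ha : a < l) (ψ' : Fin a → Fin m) :
    aOf (up (l := l) a ψ') = a := by
  have hset : (Finset.univ : Finset (Fin l)).filter (fun y => up (l := l) a ψ' y = Fin.last m)
      = Finset.Ici (⟨a, ha⟩ : Fin l) := by
    ext y
    simp only [Finset.mem_filter, Finset.mem_univ, true_and, Finset.mem_Ici]
    constructor
    · intro hy
      by_contra h
      have hya : (y : ℕ) < a := by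
        simpa [Fin.le_def] using h
      rw [up, dif_pos hya] at hy
      have := congrArg Fin.val hy
      simp at this
      have := (ψ' ⟨y, hya⟩).2
      omega
    · intro hy
      have hya : ¬ (y : ℕ) < a := by
        simpa [Fin.le_def] using hy
      simp [up, hya]
  rw [aOf, hset, Fin.card_Ici]
  simp only [Fin.val_mk]
  omega

lemma up_down {l m : ℕ} {ψ : Fin l → Fin (m + 1)} (hm : Monotone ψ)
    (hs : Function.Surjective ψ) : up (l := l) (aOf ψ) (down ψ hm hs) = ψ := by
  funext x
  by_cases hx : (x : ℕ) < aOf ψ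
  · show (if h : (x : ℕ) < aOf ψ
        then (down ψ hm hs ⟨(x : ℕ), h⟩).castSucc else Fin.last m) = ψ x
    rw [dif_pos hx]
    exact Fin.ext rfl
  · show (if h : (x : ℕ) < aOf ψ
        then (down ψ hm hs ⟨(x : ℕ), h⟩).castSucc else Fin.last m) = ψ x
    rw [dif_neg hx]
    exact ((fiber_top_iff hm hs x).mpr (Nat.le_of_not_lt hx)).symm

lemma down_up {l m a : ℕ} (ha : a < l) (ψ' : Fin a → Fin m) (hm : Monotone (up (l := l) a ψ'))
    (hs : Function.Surjective (up (l := l) a ψ')) :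
    HEq (down (up (l := l) a ψ') hm hs) ψ' := by
  rw [Fin.heq_fun_iff (aOf_up ha ψ')]
  intro i
  have hia : (i : ℕ) < a := lt_of_lt_of_le i.2 (le_of_eq (aOf_up ha ψ'))
  apply Fin.ext
  show (up (l := l) a ψ' (Fin.castLE (Nat.sub_le _ _) i)).val = _
  have hc : ((Fin.castLE (Nat.sub_le _ _) i : Fin l) : ℕ) < a := hia
  show (if h : ((Fin.castLE (Nat.sub_le _ _) i : Fin l) : ℕ) < a
      then (ψ' ⟨((Fin.castLE (Nat.sub_le _ _) i : Fin l) : ℕ), h⟩).castSucc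
      else Fin.last m).val = _
  rw [dif_pos hc]
  rfl

lemma card_fiber_down {l m : ℕ} {ψ : Fin l → Fin (m + 1)} (hm : Monotone ψ)
    (hs : Function.Surjective ψ) (i : Fin m) :
    ((Finset.univ : Finset (Fin (aOf ψ))).filter (fun x => down ψ hm hs x = i)).card
      = ((Finset.univ : Finset (Fin l)).filter (fun j => ψ j = i.castSucc)).card := by
  apply Finset.card_bij (fun x _ => Fin.castLE (Nat.sub_le _ _) x)
  · intro x hx
    simp only [Finset.mem_filter, Finset.mem_univ, true_and]
    replace hx := ((@Finset.mem_filter _ _ (fun _ => instDecidableEqFin _ _ _) _ _).mp hx).2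
    have hval := congrArg Fin.val hx
    simp only [down] at hval
    apply Fin.ext
    simpa using hval
  · intro x hx y hy hxy
    exact Fin.castLE_injective _ hxy
  · intro y hy
    simp only [Finset.mem_filter, Finset.mem_univ, true_and] at hy
    have hylt : (y : ℕ) < aOf ψ := by
      by_contra h
      have h2 := (fiber_top_iff hm hs y).mpr (Nat.le_of_not_lt h)
      rw [hy] at h2
      have h3 := congrArg Fin.val h2
      simp only [Fin.coe_castSucc, Fin.val_last] at h3
      have h4 := i.2
      omega
    refine ⟨⟨(y : ℕ), hylt⟩, ?_, Fin.ext (by simp)⟩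
    refine (@Finset.mem_filter _ _ (fun _ => instDecidableEqFin _ _ _) _ _).mpr ⟨Finset.mem_univ _, ?_⟩
    apply Fin.ext
    show (ψ (Fin.castLE (Nat.sub_le _ _) (⟨(y : ℕ), hylt⟩ : Fin (aOf ψ)))).val = (i : ℕ)
    exact congrArg Fin.val hy

lemma W_down {l m : ℕ} {ψ : Fin l → Fin (m + 1)} (hm : Monotone ψ)
    (hs : Function.Surjective ψ) :
    W ψ = (1 / (Nat.factorial (l - aOf ψ)) : ℚ) * W (down ψ hm hs) := by
  rw [W, Fin.prod_univ_castSucc, mul_comm]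
  congr 1
  · rw [card_fiber_top]
  · rw [W]
    apply Finset.prod_congr rfl
    intro i _
    rw [card_fiber_down hm hs i]

lemma mem_MS {l m : ℕ} {ψ : Fin l → Fin m} :
    ψ ∈ MS l m ↔ Monotone ψ ∧ Function.Surjective ψ := by
  simp [MS]

/-- Key recursion: peel off the top block. -/
lemma key {l m : ℕ} (hl : 1 ≤ l) :
    Sm l (m + 1) = ∑ a ∈ Finset.range l, (1 / (Nat.factorial (l - a)) : ℚ) * Sm a m := by
  have hrhs : ∑ a ∈ Finset.range l, (1 / (Nat.factorial (l - a)) : ℚ) * Sm a m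
      = ∑ p ∈ (Finset.range l).sigma (fun a => MS a m),
          (1 / (Nat.factorial (l - p.1)) : ℚ) * W p.2 := by
    rw [Finset.sum_sigma]
    apply Finset.sum_congr rfl
    intro a _
    rw [Sm, Finset.mul_sum]
  rw [hrhs, Sm]
  refine Finset.sum_bij'
    (fun ψ hψ => ⟨aOf ψ, down ψ (mem_MS.mp hψ).1 (mem_MS.mp hψ).2⟩)
    (fun p _ => up p.1 p.2) ?_ ?_ ?_ ?_ ?_
  · intro ψ hψ
    obtain ⟨hm, hs⟩ := mem_MS.mp hψ
    rw [Finset.mem_sigma]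
    exact ⟨Finset.mem_range.mpr (aOf_lt hl hs), mem_MS.mpr (down_mem hm hs)⟩
  · intro p hp
    rw [Finset.mem_sigma] at hp
    obtain ⟨ha, hψ'⟩ := hp
    obtain ⟨hm, hs⟩ := mem_MS.mp hψ'
    exact mem_MS.mpr (up_mem (Finset.mem_range.mp ha) hm hs)
  · intro ψ hψ
    obtain ⟨hm, hs⟩ := mem_MS.mp hψ
    exact up_down hm hs
  · intro p hp
    rw [Finset.mem_sigma] at hp
    obtain ⟨ha, hψ'⟩ := hp
    have ha' := Finset.mem_range.mp ha
    obtain ⟨hm2, hs2⟩ := mem_MS.mp hψ'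
    exact Sigma.ext (aOf_up ha' p.2)
      (down_up ha' p.2 (up_mem ha' hm2 hs2).1 (up_mem ha' hm2 hs2).2)
  · intro ψ hψ
    obtain ⟨hm, hs⟩ := mem_MS.mp hψ
    exact W_down hm hs

lemma Sm_of_lt {l m : ℕ} (h : l < m) : Sm l m = 0 := by
  have hMS : MS l m = ∅ := by
    ext ψ
    simp only [MS, Finset.mem_filter, Finset.mem_univ, true_and, Finset.notMem_empty,
      iff_false, not_and]
    intro _ hs
    have := Fintype.card_le_of_surjective ψ hs
    simp only [Fintype.card_fin] at this
    omega
  simp [Sm, hMS]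

lemma Sm_zero_zero : Sm 0 0 = 1 := by
  have hMS : MS 0 0 = Finset.univ := by
    ext ψ
    simp only [MS, Finset.mem_filter, Finset.mem_univ, true_and, iff_true]
    exact ⟨fun x => x.elim0, fun b => b.elim0⟩
  rw [Sm, hMS]
  have : ∀ ψ : Fin 0 → Fin 0, W ψ = 1 := by
    intro ψ
    rw [W]
    exact Finset.prod_of_isEmpty _
  simp [this]

lemma Sm_pos_zero {l : ℕ} (hl : 1 ≤ l) : Sm l 0 = 0 := by
  have : IsEmpty (Fin l → Fin 0) := by
    refine ⟨fun ψ => ?_⟩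
    exact (ψ ⟨0, hl⟩).elim0
  rw [Sm, MS]
  rw [Finset.univ_eq_empty]
  simp

lemma binom {n : ℕ} (hn : 1 ≤ n) :
    ∑ a ∈ Finset.range n,
      ((-1 : ℚ)) ^ (n - 1 - a) * ((1 / (Nat.factorial (n - a)) : ℚ) * (1 / Nat.factorial a)) =
      1 / Nat.factorial n := by
  have hterm : ∀ a ∈ Finset.range n,
      ((-1 : ℚ)) ^ (n - 1 - a) * ((1 / (Nat.factorial (n - a)) : ℚ) * (1 / Nat.factorial a))
      = ((-1 : ℚ)) ^ (n - 1) * (((-1 : ℚ)) ^ a * (n.choose a : ℚ)) * (1 / Nat.factorial n) := by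
    intro a ha
    have halt : a < n := Finset.mem_range.mp ha
    have hpow : ((-1 : ℚ)) ^ (n - 1 - a) = ((-1 : ℚ)) ^ (n - 1) * ((-1 : ℚ)) ^ a := by
      have h1 : (n - 1 - a) + a = n - 1 := by omega
      calc ((-1 : ℚ)) ^ (n - 1 - a)
          = ((-1 : ℚ)) ^ (n - 1 - a) * (((-1 : ℚ)) ^ a * ((-1 : ℚ)) ^ a) := by
            rw [← mul_pow]; norm_num
        _ = (((-1 : ℚ)) ^ (n - 1 - a) * ((-1 : ℚ)) ^ a) * ((-1 : ℚ)) ^ a := by ring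
        _ = ((-1 : ℚ)) ^ (n - 1) * ((-1 : ℚ)) ^ a := by rw [← pow_add, h1]
    have hch : (n.choose a : ℚ) = (Nat.factorial n : ℚ) /
        ((Nat.factorial a : ℚ) * (Nat.factorial (n - a) : ℚ)) := by
      exact_mod_cast Nat.cast_choose ℚ (le_of_lt halt)
    have hfac : (Nat.factorial n : ℚ) ≠ 0 := by positivity
    have hfa : (Nat.factorial a : ℚ) ≠ 0 := by positivity
    have hfna : (Nat.factorial (n - a) : ℚ) ≠ 0 := by positivity
    rw [hpow, hch]
    field_simp
  rw [Finset.sum_congr rfl hterm]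
  have halt : ∑ a ∈ Finset.range n, ((-1 : ℚ)) ^ a * (n.choose a : ℚ) = -((-1 : ℚ)) ^ n := by
    have h0 : ∑ a ∈ Finset.range (n + 1), ((-1 : ℤ)) ^ a * (n.choose a : ℤ) = 0 :=
      Int.alternating_sum_range_choose_of_ne (by omega)
    have h1 : ∑ a ∈ Finset.range (n + 1), ((-1 : ℚ)) ^ a * (n.choose a : ℚ) = 0 := by
      have h2 := congrArg (fun z : ℤ => (z : ℚ)) h0
      push_cast at h2
      simpa using h2
    rw [Finset.sum_range_succ] at h1
    simp only [Nat.choose_self, Nat.cast_one, mul_one] at h1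
    linarith
  calc ∑ a ∈ Finset.range n,
        ((-1 : ℚ)) ^ (n - 1) * (((-1 : ℚ)) ^ a * (n.choose a : ℚ)) * (1 / Nat.factorial n)
      = ((-1 : ℚ)) ^ (n - 1) * (∑ a ∈ Finset.range n, ((-1 : ℚ)) ^ a * (n.choose a : ℚ)) *
          (1 / Nat.factorial n) := by
        rw [Finset.mul_sum, Finset.sum_mul]
    _ = ((-1 : ℚ)) ^ (n - 1) * (-((-1 : ℚ)) ^ n) * (1 / Nat.factorial n) := by rw [halt]
    _ = 1 / Nat.factorial n := by
        have : ((-1 : ℚ)) ^ n = ((-1 : ℚ)) ^ (n - 1) * (-1) := by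
          rw [← pow_succ]
          congr 1
          omega
        rw [this]
        have h2 : ((-1 : ℚ)) ^ (n - 1) * ((-1 : ℚ)) ^ (n - 1) = 1 := by
          rw [← mul_pow]; norm_num
        calc ((-1 : ℚ)) ^ (n - 1) * (-(((-1 : ℚ)) ^ (n - 1) * (-1))) * (1 / Nat.factorial n)
            = (((-1 : ℚ)) ^ (n - 1) * ((-1 : ℚ)) ^ (n - 1)) * (1 / Nat.factorial n) := by ring
          _ = 1 / Nat.factorial n := by rw [h2, one_mul]

lemma g_eq (l : ℕ) :
    (∑ l' ∈ Finset.range (l + 1), ((-1 : ℚ)) ^ (l - l') * Sm l l') = 1 / Nat.factorial l := by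
  induction l using Nat.strong_induction_on with
  | _ l ih =>
    rcases Nat.eq_zero_or_pos l with rfl | hl
    · simp [Sm_zero_zero]
    · rw [Finset.sum_range_succ']
      have h0 : ((-1 : ℚ)) ^ (l - 0) * Sm l 0 = 0 := by
        rw [Sm_pos_zero hl, mul_zero]
      rw [h0, add_zero]
      have hstep : ∀ m ∈ Finset.range l,
          ((-1 : ℚ)) ^ (l - (m + 1)) * Sm l (m + 1)
          = ∑ a ∈ Finset.range l,
              ((-1 : ℚ)) ^ (l - 1 - m) * ((1 / (Nat.factorial (l - a)) : ℚ) * Sm a m) := by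
        intro m _
        rw [key hl, Finset.mul_sum]
        apply Finset.sum_congr rfl
        intro a _
        rw [show l - (m + 1) = l - 1 - m from by omega]
      rw [Finset.sum_congr rfl hstep, Finset.sum_comm]
      have hinner : ∀ a ∈ Finset.range l,
          (∑ m ∈ Finset.range l,
            ((-1 : ℚ)) ^ (l - 1 - m) * ((1 / (Nat.factorial (l - a)) : ℚ) * Sm a m))
          = ((-1 : ℚ)) ^ (l - 1 - a) * ((1 / (Nat.factorial (l - a)) : ℚ)
              * (1 / Nat.factorial a)) := by
        intro a ha
        have halt : a < l := Finset.mem_range.mp ha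
        have hsub : Finset.range (a + 1) ⊆ Finset.range l := by
          apply Finset.range_subset_range.mpr; omega
        rw [← Finset.sum_subset hsub (fun m _ hm => by
          have : a < m := by
            simp only [Finset.mem_range, not_lt] at hm
            omega
          rw [Sm_of_lt this, mul_zero, mul_zero])]
        have hsgn : ∀ m ∈ Finset.range (a + 1),
            ((-1 : ℚ)) ^ (l - 1 - m) * ((1 / (Nat.factorial (l - a)) : ℚ) * Sm a m)
            = ((-1 : ℚ)) ^ (l - 1 - a) * (1 / (Nat.factorial (l - a)) : ℚ)
                * (((-1 : ℚ)) ^ (a - m) * Sm a m) := by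
          intro m hm
          have hma : m ≤ a := by
            have := Finset.mem_range.mp hm; omega
          have : l - 1 - m = (l - 1 - a) + (a - m) := by omega
          rw [this, pow_add]
          ring
        rw [Finset.sum_congr rfl hsgn, ← Finset.mul_sum]
        have := ih a halt
        rw [this]
        ring
      rw [Finset.sum_congr rfl hinner]
      exact binom hl

theorem stmt0 (l : ℕ) (hl : 1 ≤ l) :
    ∑ l' ∈ Finset.range (l + 1),
      ∑ ψ ∈ (Finset.univ : Finset (Fin l → Fin l')).filter
          (fun ψ => Monotone ψ ∧ Function.Surjective ψ),
        ((-1 : ℚ)) ^ (l - l') *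
          ∏ i : Fin l', (1 : ℚ) /
            (Nat.factorial ((Finset.univ : Finset (Fin l)).filter (fun j => ψ j = i)).card) =
      1 / Nat.factorial l := by
  have h := g_eq l
  rw [← h]
  apply Finset.sum_congr rfl
  intro l' _
  rw [Sm, Finset.mul_sum]
  apply Finset.sum_congr rfl
  intro ψ _
  rw [W]
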